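/- arXiv:2101.12601 — 5 statements merged into one kernel-verified Lean document; each statement's English description precedes it below -/
import Mathlib

section
/- For every real a ≥ 0 and every real z with 0 ≤ z < √e/2, one has a · exp(−max(a−1, 0)/2) · z < 1. -/
/-- For every `a ≥ 0` and `0 ≤ z < √e/2`, one has `a · exp(−max(a−1,0)/2) · z < 1`. -/
theorem contraction_condition_holds (a z : ℝ) (ha : 0 ≤ a) (hz0 : 0 ≤ z)
    (hz : z < Real.sqrt (Real.exp 1) / 2) :
    a * Real.exp (-(max (a - 1) 0) / 2) * z < 1 := by
  have hsq : Real.exp (1/2) * Real.exp (1/2) = Real.exp 1 := by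
    rw [← Real.exp_add]; norm_num
  have hE : Real.exp (1/2) < 2 := by
    nlinarith [Real.exp_one_lt_d9, Real.exp_pos (1/2 : ℝ)]
  have hsqrt : Real.sqrt (Real.exp 1) = Real.exp (1/2) := by
    rw [← hsq, Real.sqrt_mul_self (Real.exp_pos _).le]
  have hbound : a * Real.exp (-(max (a - 1) 0) / 2) ≤ 2 * Real.exp (-(1/2)) := by
    rcases le_total a 1 with h | h
    · rw [max_eq_right (by linarith)]
      simp only [neg_zero, zero_div, Real.exp_zero, mul_one]
      have : (1:ℝ) < 2 * Real.exp (-(1/2)) := by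
        rw [Real.exp_neg]
        rw [show (2:ℝ) * (Real.exp (1/2))⁻¹ = 2 / Real.exp (1/2) by ring,
          lt_div_iff₀ (Real.exp_pos _)]
        linarith
      linarith
    · rw [max_eq_left (by linarith)]
      have key : a ≤ 2 * Real.exp ((a - 2) / 2) := by
        have := Real.add_one_le_exp ((a - 2) / 2)
        nlinarith [Real.exp_pos ((a-2)/2)]
      calc a * Real.exp (-(a - 1) / 2) ≤ 2 * Real.exp ((a - 2) / 2) * Real.exp (-(a - 1) / 2) := by
            exact mul_le_mul_of_nonneg_right key (Real.exp_pos _).le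
        _ = 2 * Real.exp (-(1/2)) := by
            rw [mul_assoc, ← Real.exp_add]; ring_nf
  have h2 : 2 * Real.exp (-(1/2)) > 0 := by positivity
  calc a * Real.exp (-(max (a - 1) 0) / 2) * z ≤ 2 * Real.exp (-(1/2)) * z :=
        mul_le_mul_of_nonneg_right hbound hz0
    _ < 2 * Real.exp (-(1/2)) * (Real.sqrt (Real.exp 1) / 2) := by
        exact mul_lt_mul_of_pos_left hz h2
    _ = 1 := by
        rw [hsqrt, Real.exp_neg]
        field_simp
end

section
/- Let (Ω, ℱ, P) be a probability space, let Δ and Δ̃ be random variables taking values in [0, 1/2], and suppose the conditional expectation satisfies E[Δ | σ(Δ̃)] ≤ Δ̃ almost surely. Let α > 0 and let g : ℝ → ℝ be differentiable on [0, 1/2], decreasing on [0, 1/2], and α-strongly convex on [0, 1/2] (i.e., x ↦ g(x) − (α/2)x² is convex on [0, 1/2]). Then E[g(Δ)] − E[g(Δ̃)] ≥ (α/2) · E[(Δ − Δ̃)²]. In particular E[g(Δ)] − E[g(Δ̃)] ≥ 0. -/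
open MeasureTheory

private lemma tangent_aux {S : Set ℝ} {f : ℝ → ℝ} (hconv : ConvexOn ℝ S f)
    (hdiff : DifferentiableOn ℝ f S) {x y : ℝ} (hx : x ∈ S) (hy : y ∈ S) :
    derivWithin f S y * (x - y) ≤ f x - f y := by
  rcases lt_trichotomy x y with h | h | h
  · have hs := hconv.slope_le_derivWithin hx hy h (hdiff y hy)
    rw [slope_def_field] at hs
    have h2 := (div_le_iff₀ (by linarith : (0:ℝ) < y - x)).mp hs
    have h3 : derivWithin f S y * (x - y) = -(derivWithin f S y * (y - x)) := by ring
    linarith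
  · subst h; simp
  · have hs := hconv.derivWithin_le_slope hy hx h (hdiff y hy)
    rw [slope_def_field] at hs
    have := (le_div_iff₀ (by linarith : (0:ℝ) < x - y)).mp hs
    linarith

private lemma derivWithin_nonpos_aux {f : ℝ → ℝ}
    (hdiff : DifferentiableOn ℝ f (Set.Icc (0:ℝ) (1/2)))
    (hanti : AntitoneOn f (Set.Icc (0:ℝ) (1/2))) {y : ℝ}
    (hy : y ∈ Set.Icc (0:ℝ) (1/2)) :
    derivWithin f (Set.Icc (0:ℝ) (1/2)) y ≤ 0 := by
  have hder := (hdiff y hy).hasDerivWithinAt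
  rw [hasDerivWithinAt_iff_tendsto_slope] at hder
  have hne : (nhdsWithin y (Set.Icc (0:ℝ) (1/2) \ {y})).NeBot := by
    rcases lt_or_eq_of_le hy.2 with h | h
    · have hsub : Set.Ioo y (1/2) ⊆ Set.Icc (0:ℝ) (1/2) \ {y} := fun t ht =>
        ⟨⟨le_trans hy.1 ht.1.le, ht.2.le⟩, ne_of_gt ht.1⟩
      have hcl : y ∈ closure (Set.Ioo y (1/2)) := by
        rw [closure_Ioo (ne_of_lt h)]; exact ⟨le_refl y, h.le⟩
      exact (mem_closure_iff_nhdsWithin_neBot.mp hcl).mono (nhdsWithin_mono y hsub)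
    · have h0 : (0:ℝ) < y := by rw [h]; norm_num
      have hsub : Set.Ioo (0:ℝ) y ⊆ Set.Icc (0:ℝ) (1/2) \ {y} := fun t ht =>
        ⟨⟨ht.1.le, by rw [← h]; exact ht.2.le⟩, ne_of_lt ht.2⟩
      have hcl : y ∈ closure (Set.Ioo (0:ℝ) y) := by
        rw [closure_Ioo h0.ne]; exact ⟨h0.le, le_refl y⟩
      exact (mem_closure_iff_nhdsWithin_neBot.mp hcl).mono (nhdsWithin_mono y hsub)
  refine le_of_tendsto hder ?_
  filter_upwards [self_mem_nhdsWithin] with x hx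
  obtain ⟨hxS, hxy⟩ := hx
  rw [slope_def_field]
  rcases lt_or_gt_of_ne (Set.mem_singleton_iff.not.mp hxy) with hlt | hgt
  · exact div_nonpos_of_nonneg_of_nonpos (by linarith [hanti hxS hy hlt.le]) (by linarith)
  · exact div_nonpos_of_nonpos_of_nonneg (by linarith [hanti hy hxS hgt.le]) (by linarith)

/-- If `Δ, Δ̃` take values in `[0,1/2]` and `E[Δ | σ(Δ̃)] ≤ Δ̃` a.s., and `g` is
differentiable, decreasing, and `α`-strongly convex on `[0,1/2]`, then
`E[g(Δ)] − E[g(Δ̃)] ≥ (α/2)·E[(Δ − Δ̃)²] ≥ 0`. -/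
theorem potential_nonneg {Ω : Type*} [m0 : MeasurableSpace Ω]
    (μ : Measure Ω) [IsProbabilityMeasure μ]
    (Δ Δt : Ω → ℝ) (hΔ : Measurable Δ) (hΔt : Measurable Δt)
    (hΔr : ∀ ω, Δ ω ∈ Set.Icc (0 : ℝ) (1 / 2))
    (hΔtr : ∀ ω, Δt ω ∈ Set.Icc (0 : ℝ) (1 / 2))
    (hdeg : μ[Δ | MeasurableSpace.comap Δt Real.measurableSpace] ≤ᵐ[μ] Δt)
    (α : ℝ) (hα : 0 < α) (g : ℝ → ℝ)
    (hg_diff : DifferentiableOn ℝ g (Set.Icc 0 (1 / 2)))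
    (hg_anti : AntitoneOn g (Set.Icc 0 (1 / 2)))
    (hg_conv : ConvexOn ℝ (Set.Icc 0 (1 / 2)) (fun x => g x - α / 2 * x ^ 2)) :
    α / 2 * ∫ ω, (Δ ω - Δt ω) ^ 2 ∂μ ≤ (∫ ω, g (Δ ω) ∂μ) - ∫ ω, g (Δt ω) ∂μ ∧
    0 ≤ (∫ ω, g (Δ ω) ∂μ) - ∫ ω, g (Δt ω) ∂μ := by
  classical
  set S : Set ℝ := Set.Icc (0:ℝ) (1/2) with hSdef
  set m : MeasurableSpace Ω := MeasurableSpace.comap Δt Real.measurableSpace with hmdef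
  have hm0 : m ≤ m0 := hΔt.comap_le
  haveI : SigmaFinite (μ.trim hm0) := by
    haveI : IsFiniteMeasure (μ.trim hm0) := isFiniteMeasure_trim hm0
    infer_instance
  set hc : ℝ → ℝ := fun x => g x - α / 2 * x ^ 2 with hcdef
  have hq_diff : Differentiable ℝ (fun x : ℝ => α / 2 * x ^ 2) :=
    (differentiable_pow 2).const_mul (α/2)
  have hc_diff : DifferentiableOn ℝ hc S := hg_diff.sub hq_diff.differentiableOn
  have hud : UniqueDiffOn ℝ S := uniqueDiffOn_Icc (by norm_num)
  -- the derivative identity: derivWithin g S y = derivWithin hc S y + α * y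
  have hder_eq : ∀ y ∈ S, derivWithin hc S y = derivWithin g S y - α * y := by
    intro y hy
    have hq' : HasDerivWithinAt (fun x : ℝ => α / 2 * x ^ 2) (α * y) S y := by
      have := ((hasDerivAt_pow 2 y).const_mul (α/2)).hasDerivWithinAt (s := S)
      refine this.congr_deriv ?_
      ring
    have hg' := (hg_diff y hy).hasDerivWithinAt
    exact (hg'.sub hq').derivWithin (hud y hy)
  -- deriv of g nonpositive on S
  have hg_der_nonpos : ∀ y ∈ S, derivWithin g S y ≤ 0 := fun y hy =>
    derivWithin_nonpos_aux hg_diff hg_anti hy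
  -- clamp
  set proj : ℝ → ℝ := fun t => max 0 (min t (1/2)) with hprojdef
  have hproj_mem : ∀ t, proj t ∈ S := fun t =>
    ⟨le_max_left _ _, max_le (by norm_num) (min_le_right _ _)⟩
  have hproj_mono : Monotone proj := fun a b hab =>
    max_le_max le_rfl (min_le_min hab le_rfl)
  have hproj_id : ∀ y ∈ S, proj y = y := by
    intro y hy
    simp only [hprojdef]
    rw [min_eq_left hy.2, max_eq_right hy.1]
  set Φ : ℝ → ℝ := fun t => derivWithin hc S (proj t) + α * proj t with hΦdef
  have hφc_mono : MonotoneOn (derivWithin hc S) S :=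
    hg_conv.monotoneOn_derivWithin hc_diff
  have hΦ_mono : Monotone Φ := fun a b hab =>
    add_le_add (hφc_mono (hproj_mem a) (hproj_mem b) (hproj_mono hab))
      (mul_le_mul_of_nonneg_left (hproj_mono hab) hα.le)
  have hΦ_meas : Measurable Φ := hΦ_mono.measurable
  have hΦ_eq : ∀ y ∈ S, Φ y = derivWithin g S y := by
    intro y hy
    simp only [hΦdef, hproj_id y hy, hder_eq y hy]
    ring
  have hΦ_nonpos : ∀ t, Φ t ≤ 0 := by
    intro t
    have h1 : Φ t = Φ (proj t) := by
      simp only [hΦdef, hproj_id (proj t) (hproj_mem t)]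
    rw [h1, hΦ_eq (proj t) (hproj_mem t)]
    exact hg_der_nonpos _ (hproj_mem t)
  set Y : Ω → ℝ := fun ω => Φ (Δt ω) with hYdef
  set c : ℝ := -Φ 0 with hcdef'
  have hc_nonneg : 0 ≤ c := by
    simp only [hcdef']
    linarith [hΦ_nonpos 0]
  have hY_bdd : ∀ ω, ‖Y ω‖ ≤ c := by
    intro ω
    rw [Real.norm_eq_abs, abs_le]
    constructor
    · simp only [hcdef', neg_neg]
      exact hΦ_mono (hΔtr ω).1
    · exact (hΦ_nonpos _).trans hc_nonneg
  have hΔt_m : Measurable[m] Δt := fun s hs => ⟨s, hs, rfl⟩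
  have hY_m : StronglyMeasurable[m] Y := (hΦ_meas.comp hΔt_m).stronglyMeasurable
  have hY_meas := hΦ_meas.comp hΔt
  -- integrability of the bounded pieces
  have hint_of_bdd : ∀ (f : Ω → ℝ) (C : ℝ), AEStronglyMeasurable[m0] f μ → (∀ ω, ‖f ω‖ ≤ C) →
      Integrable f μ := by
    intro f C hf hbd
    exact (integrable_const C).mono' hf (Filter.Eventually.of_forall hbd)
  have hΔ_int : Integrable Δ μ := hint_of_bdd Δ 1 hΔ.aestronglyMeasurable (fun ω => by
    have := hΔr ω; rw [Real.norm_eq_abs, abs_le]; constructor <;> [linarith [this.1]; linarith [this.2]])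
  have hΔt_int : Integrable Δt μ := hint_of_bdd Δt 1 hΔt.aestronglyMeasurable (fun ω => by
    have := hΔtr ω; rw [Real.norm_eq_abs, abs_le]; constructor <;> [linarith [this.1]; linarith [this.2]])
  have hYΔ_int : Integrable (Y * Δ) μ := hint_of_bdd _ (c * 1) (hY_meas.mul hΔ).aestronglyMeasurable (fun ω => by
    have h1 := hΔr ω
    have h2 : ‖Δ ω‖ ≤ 1 := by rw [Real.norm_eq_abs, abs_le]; constructor <;> [linarith [h1.1]; linarith [h1.2]]
    calc ‖(Y * Δ) ω‖ = ‖Y ω‖ * ‖Δ ω‖ := norm_mul _ _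
      _ ≤ c * 1 := mul_le_mul (hY_bdd ω) h2 (norm_nonneg _) hc_nonneg)
  have hYΔt_int : Integrable (fun ω => Y ω * Δt ω) μ := hint_of_bdd _ (c * 1) (hY_meas.mul hΔt).aestronglyMeasurable (fun ω => by
    have h1 := hΔtr ω
    have h2 : ‖Δt ω‖ ≤ 1 := by rw [Real.norm_eq_abs, abs_le]; constructor <;> [linarith [h1.1]; linarith [h1.2]]
    calc ‖Y ω * Δt ω‖ = ‖Y ω‖ * ‖Δt ω‖ := norm_mul _ _
      _ ≤ c * 1 := mul_le_mul (hY_bdd ω) h2 (norm_nonneg _) hc_nonneg)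
  have hYcond_int : Integrable (Y * μ[Δ | m]) μ :=
    integrable_condExp.bdd_mul hY_meas.aestronglyMeasurable
      (Filter.Eventually.of_forall hY_bdd)
  -- key conditional-expectation step
  have hpull : μ[Y * Δ | m] =ᵐ[μ] Y * μ[Δ | m] :=
    condExp_mul_of_stronglyMeasurable_left hY_m hYΔ_int hΔ_int
  have hstep : ∫ ω, Y ω * Δt ω ∂μ ≤ ∫ ω, (Y * Δ) ω ∂μ := by
    have h1 : ∫ ω, (Y * Δ) ω ∂μ = ∫ ω, (Y * μ[Δ | m]) ω ∂μ := by
      rw [← integral_condExp hm0 (f := Y * Δ)]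
      exact integral_congr_ae hpull
    rw [h1]
    refine integral_mono_ae hYΔt_int hYcond_int ?_
    filter_upwards [hdeg] with ω hω
    exact mul_le_mul_of_nonpos_left hω (hΦ_nonpos _)
  -- pointwise strong-convexity inequality
  have hpoint : ∀ ω, Y ω * (Δ ω - Δt ω) + α / 2 * (Δ ω - Δt ω) ^ 2
      ≤ g (Δ ω) - g (Δt ω) := by
    intro ω
    have hx := hΔr ω
    have hy := hΔtr ω
    have htan := tangent_aux hg_conv hc_diff hx hy
    have hYval : Y ω = derivWithin hc S (Δt ω) + α * Δt ω := by
      simp only [hYdef, hΦdef, hproj_id (Δt ω) hy]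
    simp only [hcdef] at htan
    rw [hYval]
    nlinarith [htan]
  -- integrability of g ∘ Δ and g ∘ Δt
  have hg_contS : ContinuousOn g S := hg_diff.continuousOn
  have hproj_cont : Continuous proj :=
    continuous_const.max (continuous_id.min continuous_const)
  have hgp_cont : Continuous (g ∘ proj) :=
    hg_contS.comp_continuous hproj_cont hproj_mem
  have hCg : ∀ x ∈ S, ‖g x‖ ≤ max ‖g 0‖ ‖g (1/2)‖ := by
    intro x hxS
    have h1 : g x ≤ g 0 := hg_anti (Set.left_mem_Icc.mpr (by norm_num)) hxS hxS.1
    have h2 : g (1/2) ≤ g x := hg_anti hxS (Set.right_mem_Icc.mpr (by norm_num)) hxS.2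
    simp only [Real.norm_eq_abs]
    rw [abs_le]
    constructor
    · have h4 := neg_abs_le (g (1/2))
      have h5 := le_max_right |g 0| |g (1/2)|
      linarith
    · have h4 := le_abs_self (g 0)
      have h5 := le_max_left |g 0| |g (1/2)|
      linarith
  have hgΔ_int : Integrable (fun ω => g (Δ ω)) μ := by
    have hmeq : (fun ω => g (Δ ω)) = (g ∘ proj) ∘ Δ := by
      funext ω; simp [Function.comp, hproj_id _ (hΔr ω)]
    refine hint_of_bdd _ (max ‖g 0‖ ‖g (1/2)‖) ?_ (fun ω => hCg _ (hΔr ω))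
    rw [hmeq]; exact (hgp_cont.measurable.comp hΔ).aestronglyMeasurable
  have hgΔt_int : Integrable (fun ω => g (Δt ω)) μ := by
    have hmeq : (fun ω => g (Δt ω)) = (g ∘ proj) ∘ Δt := by
      funext ω; simp [Function.comp, hproj_id _ (hΔtr ω)]
    refine hint_of_bdd _ (max ‖g 0‖ ‖g (1/2)‖) ?_ (fun ω => hCg _ (hΔtr ω))
    rw [hmeq]; exact (hgp_cont.measurable.comp hΔt).aestronglyMeasurable
  have hsq_int : Integrable (fun ω => (Δ ω - Δt ω) ^ 2) μ :=
    hint_of_bdd _ 1 ((hΔ.sub hΔt).pow_const 2).aestronglyMeasurable (fun ω => by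
      have h1 := hΔr ω; have h2 := hΔtr ω
      rw [Real.norm_eq_abs, abs_of_nonneg (sq_nonneg _)]
      nlinarith [h1.1, h1.2, h2.1, h2.2])
  -- integrate the pointwise inequality
  have hLHS_int : Integrable (fun ω => Y ω * (Δ ω - Δt ω) + α / 2 * (Δ ω - Δt ω) ^ 2) μ := by
    have h1 : Integrable (fun ω => Y ω * (Δ ω - Δt ω)) μ := by
      have : (fun ω => Y ω * (Δ ω - Δt ω)) = fun ω => (Y * Δ) ω - Y ω * Δt ω := by
        funext ω; simp [mul_sub]
      rw [this]; exact hYΔ_int.sub hYΔt_int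
    exact h1.add (hsq_int.const_mul _)
  have hint_ineq := integral_mono hLHS_int (hgΔ_int.sub hgΔt_int) hpoint
  simp only [Pi.sub_apply] at hint_ineq
  rw [integral_sub hgΔ_int hgΔt_int] at hint_ineq
  have hsplit : ∫ ω, (Y ω * (Δ ω - Δt ω) + α / 2 * (Δ ω - Δt ω) ^ 2) ∂μ
      = (∫ ω, (Y * Δ) ω ∂μ - ∫ ω, Y ω * Δt ω ∂μ) + α / 2 * ∫ ω, (Δ ω - Δt ω) ^ 2 ∂μ := by
    have h1 : Integrable (fun ω => Y ω * (Δ ω - Δt ω)) μ := by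
      have : (fun ω => Y ω * (Δ ω - Δt ω)) = fun ω => (Y * Δ) ω - Y ω * Δt ω := by
        funext ω; simp [mul_sub]
      rw [this]; exact hYΔ_int.sub hYΔt_int
    rw [integral_add h1 (hsq_int.const_mul _), integral_const_mul]
    congr 1
    have : (fun ω => Y ω * (Δ ω - Δt ω)) = fun ω => (Y * Δ) ω - Y ω * Δt ω := by
      funext ω; simp [mul_sub]
    rw [this, integral_sub hYΔ_int hYΔt_int]
  rw [hsplit] at hint_ineq
  have hsq_nonneg : 0 ≤ ∫ ω, (Δ ω - Δt ω) ^ 2 ∂μ :=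
    integral_nonneg (fun ω => sq_nonneg _)
  have hmain : α / 2 * ∫ ω, (Δ ω - Δt ω) ^ 2 ∂μ
      ≤ (∫ ω, g (Δ ω) ∂μ) - ∫ ω, g (Δt ω) ∂μ := by linarith
  exact ⟨hmain, le_trans (mul_nonneg (by linarith) hsq_nonneg) hmain⟩
end

section
/- For every real θ with 0 ≤ θ < 1, the function F_θ : ℝ → ℝ defined by F_θ(r) = 2·arctanh(θ·tanh(r/2)) is Lipschitz continuous with Lipschitz constant θ. -/
/-- The inverse hyperbolic tangent. -/
noncomputable def arctanh (y : ℝ) : ℝ := Real.log ((1 + y) / (1 - y)) / 2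

/-- The belief-propagation message function. -/
noncomputable def Ftheta (θ r : ℝ) : ℝ := 2 * arctanh (θ * Real.tanh (r / 2))

lemma Ftheta_eq (θ : ℝ) (hθ0 : 0 ≤ θ) (hθ1 : θ < 1) (r : ℝ) :
    Ftheta θ r = Real.log ((1 + θ) * Real.exp r + (1 - θ))
      - Real.log ((1 - θ) * Real.exp r + (1 + θ)) := by
  have hE : (0:ℝ) < Real.exp r := Real.exp_pos r
  have hA : (0:ℝ) < (1 + θ) * Real.exp r + (1 - θ) := by nlinarith
  have hB : (0:ℝ) < (1 - θ) * Real.exp r + (1 + θ) := by nlinarith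
  have htanh : Real.tanh (r / 2) = (Real.exp r - 1) / (Real.exp r + 1) := by
    have h3 : (0:ℝ) < Real.exp (r/2) := Real.exp_pos _
    have h2 : Real.exp r = Real.exp (r/2) * Real.exp (r/2) := by
      rw [← Real.exp_add]; ring_nf
    rw [Real.tanh_eq_sinh_div_cosh, Real.sinh_eq, Real.cosh_eq, h2, Real.exp_neg]
    field_simp
  have harg : 1 + θ * Real.tanh (r / 2) =
      ((1 + θ) * Real.exp r + (1 - θ)) / (Real.exp r + 1) := by
    rw [htanh]; field_simp; ring
  have harg2 : 1 - θ * Real.tanh (r / 2) =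
      ((1 - θ) * Real.exp r + (1 + θ)) / (Real.exp r + 1) := by
    rw [htanh]; field_simp; ring
  unfold Ftheta arctanh
  rw [harg, harg2]
  have hc : Real.exp r + 1 ≠ 0 := by positivity
  have hx : ((1 + θ) * Real.exp r + (1 - θ)) / (Real.exp r + 1)
      / (((1 - θ) * Real.exp r + (1 + θ)) / (Real.exp r + 1))
      = ((1 + θ) * Real.exp r + (1 - θ)) / ((1 - θ) * Real.exp r + (1 + θ)) := by
    field_simp
  rw [hx, Real.log_div (ne_of_gt hA) (ne_of_gt hB)]
  ring

/-- For `0 ≤ θ < 1`, the function `F_θ(r) = 2 arctanh(θ tanh(r/2))` is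
Lipschitz with constant `θ`. -/
theorem Ftheta_lipschitz (θ : ℝ) (hθ0 : 0 ≤ θ) (hθ1 : θ < 1) :
    LipschitzWith (Real.toNNReal θ) (Ftheta θ) := by
  have hfe : Ftheta θ = fun r => Real.log ((1 + θ) * Real.exp r + (1 - θ))
      - Real.log ((1 - θ) * Real.exp r + (1 + θ)) := by
    funext r; exact Ftheta_eq θ hθ0 hθ1 r
  rw [hfe]
  have key : ∀ r : ℝ, HasDerivAt (fun r => Real.log ((1 + θ) * Real.exp r + (1 - θ))
      - Real.log ((1 - θ) * Real.exp r + (1 + θ)))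
      ((1 + θ) * Real.exp r / ((1 + θ) * Real.exp r + (1 - θ))
        - (1 - θ) * Real.exp r / ((1 - θ) * Real.exp r + (1 + θ))) r := by
    intro r
    have hE : (0:ℝ) < Real.exp r := Real.exp_pos r
    have hA : (0:ℝ) < (1 + θ) * Real.exp r + (1 - θ) := by nlinarith
    have hB : (0:ℝ) < (1 - θ) * Real.exp r + (1 + θ) := by nlinarith
    have d1 : HasDerivAt (fun r => (1 + θ) * Real.exp r + (1 - θ))
        ((1 + θ) * Real.exp r) r := by
      simpa using (((Real.hasDerivAt_exp r).const_mul (1 + θ)).add_const (1 - θ))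
    have d2 : HasDerivAt (fun r => (1 - θ) * Real.exp r + (1 + θ))
        ((1 - θ) * Real.exp r) r := by
      simpa using (((Real.hasDerivAt_exp r).const_mul (1 - θ)).add_const (1 + θ))
    exact ((d1.log (ne_of_gt hA)).sub (d2.log (ne_of_gt hB)))
  have bound : ∀ r : ℝ,
      |(1 + θ) * Real.exp r / ((1 + θ) * Real.exp r + (1 - θ))
        - (1 - θ) * Real.exp r / ((1 - θ) * Real.exp r + (1 + θ))| ≤ θ := by
    intro r
    have hE : (0:ℝ) < Real.exp r := Real.exp_pos r
    have hA : (0:ℝ) < (1 + θ) * Real.exp r + (1 - θ) := by nlinarith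
    have hB : (0:ℝ) < (1 - θ) * Real.exp r + (1 + θ) := by nlinarith
    have heq : (1 + θ) * Real.exp r / ((1 + θ) * Real.exp r + (1 - θ))
        - (1 - θ) * Real.exp r / ((1 - θ) * Real.exp r + (1 + θ))
        = 4 * θ * Real.exp r
          / (((1 + θ) * Real.exp r + (1 - θ)) * ((1 - θ) * Real.exp r + (1 + θ))) := by
      rw [div_sub_div _ _ (ne_of_gt hA) (ne_of_gt hB)]; congr 1; ring
    rw [heq]
    have hD : (0:ℝ) < ((1 + θ) * Real.exp r + (1 - θ)) * ((1 - θ) * Real.exp r + (1 + θ)) :=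
      mul_pos hA hB
    have hnum : 0 ≤ 4 * θ * Real.exp r := by positivity
    rw [abs_of_nonneg (div_nonneg hnum (le_of_lt hD))]
    rw [div_le_iff₀ hD]
    nlinarith [mul_nonneg (mul_nonneg hθ0 (by nlinarith : (0:ℝ) ≤ 1 - θ^2))
      (sq_nonneg (Real.exp r - 1))]
  have := convex_univ.lipschitzOnWith_of_nnnorm_hasDerivWithin_le
    (C := Real.toNNReal θ)
    (f' := fun r => (1 + θ) * Real.exp r / ((1 + θ) * Real.exp r + (1 - θ))
        - (1 - θ) * Real.exp r / ((1 - θ) * Real.exp r + (1 + θ)))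
    (fun x _ => (key x).hasDerivWithinAt)
    (fun x _ => by
      rw [← NNReal.coe_le_coe, coe_nnnorm, Real.coe_toNNReal θ hθ0, Real.norm_eq_abs]
      exact bound x)
  exact lipschitzOnWith_univ.mp this
end

section
/- Let d be a positive integer and θ ∈ (0, 1) with d·θ > 1. Then there exist ε > 0 and x > 0 such that for every η with 1/2 − ε < η < 1/2, one has d·F_θ(x) − log((1−η)/η) > x, where F_θ(r) = 2·arctanh(θ·tanh(r/2)). -/
lemma aux_log_ge (b : ℝ) (hb0 : 0 ≤ b) (hb1 : b < 1) :
    2 * b ≤ Real.log (1 + b) - Real.log (1 - b) := by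
  set f : ℝ → ℝ := fun z => Real.log (1 + z) - Real.log (1 - z) - 2 * z with hf
  have hder : ∀ y ∈ Set.Ico (0:ℝ) 1,
      HasDerivAt f (1 / (1 + y) + 1 / (1 - y) - 2) y := by
    intro y hy
    obtain ⟨hy0, hy1⟩ := hy
    have h1p : (0:ℝ) < 1 + y := by linarith
    have h2p : (0:ℝ) < 1 - y := by linarith
    have h1 : HasDerivAt (fun z : ℝ => Real.log (1 + z)) (1 / (1 + y)) y := by
      have hinner : HasDerivAt (fun z : ℝ => 1 + z) 1 y := (hasDerivAt_id y).const_add 1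
      have := (Real.hasDerivAt_log h1p.ne').comp y hinner
      simpa [one_div, Function.comp_def] using this
    have h2 : HasDerivAt (fun z : ℝ => Real.log (1 - z)) (-(1 / (1 - y))) y := by
      have hinner : HasDerivAt (fun z : ℝ => 1 - z) (-1) y := (hasDerivAt_id y).const_sub 1
      have := (Real.hasDerivAt_log h2p.ne').comp y hinner
      simpa [one_div, Function.comp_def] using this
    have h3 : HasDerivAt (fun z : ℝ => 2 * z) 2 y := by
      simpa using (hasDerivAt_id y).const_mul 2
    have := (h1.sub h2).sub h3
    exact this.congr_deriv (by ring)
  have hmono : MonotoneOn f (Set.Ico (0:ℝ) 1) := by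
    apply monotoneOn_of_deriv_nonneg (convex_Ico 0 1)
    · exact fun y hy => ((hder y hy).continuousAt.continuousWithinAt)
    · intro y hy
      rw [interior_Ico] at hy
      exact ((hder y ⟨hy.1.le, hy.2⟩).differentiableAt.differentiableWithinAt)
    · intro y hy
      rw [interior_Ico] at hy
      obtain ⟨hy0, hy1⟩ := hy
      rw [(hder y ⟨hy0.le, hy1⟩).deriv]
      have h1p : (0:ℝ) < 1 + y := by linarith
      have h2p : (0:ℝ) < 1 - y := by linarith
      have key : (2:ℝ) ≤ 1/(1+y) + 1/(1-y) := by
        rw [div_add_div _ _ h1p.ne' h2p.ne', le_div_iff₀ (by positivity)]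
        nlinarith
      linarith
  have h0 : f 0 ≤ f b := by
    apply hmono ⟨le_refl 0, one_pos⟩ ⟨hb0, hb1⟩ hb0
  simp only [hf] at h0
  norm_num at h0
  linarith

lemma le_arctanh {y : ℝ} (h0 : 0 ≤ y) (h1 : y < 1) : y ≤ arctanh y := by
  have h1p : (0:ℝ) < 1 + y := by linarith
  have h2p : (0:ℝ) < 1 - y := by linarith
  have := aux_log_ge y h0 h1
  rw [arctanh, Real.log_div h1p.ne' h2p.ne']
  linarith

/-- If `d·θ > 1`, then there exist `ε > 0` and `x > 0` such that for every `η` with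
`1/2 − ε < η < 1/2`, one has `d·F_θ(x) − log((1−η)/η) > x`. -/
theorem wsm_fails_bsc_survey (d : ℕ) (hd : 0 < d) (θ : ℝ)
    (hθ0 : 0 < θ) (hθ1 : θ < 1) (hdθ : 1 < (d : ℝ) * θ) :
    ∃ ε : ℝ, 0 < ε ∧ ∃ x : ℝ, 0 < x ∧
      ∀ η : ℝ, 1 / 2 - ε < η → η < 1 / 2 →
        x < (d : ℝ) * Ftheta θ x - Real.log ((1 - η) / η) := by
  set D : ℝ := (d : ℝ) * θ with hD
  have hD0 : 0 < D := by positivity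
  set u : ℝ := Real.log D / 2 with hu_def
  have hu : 0 < u := by
    have := Real.log_pos hdθ
    positivity
  -- cosh u < D
  have hexp1 : 1 < Real.exp u := by
    calc (1:ℝ) = Real.exp 0 := Real.exp_zero.symm
    _ < Real.exp u := Real.exp_lt_exp.mpr hu
  have hexpsq : Real.exp u * Real.exp u = D := by
    rw [← Real.exp_add]
    have : u + u = Real.log D := by rw [hu_def]; ring
    rw [this, Real.exp_log hD0]
  have hcosh_lt_exp : Real.cosh u < Real.exp u := by
    rw [Real.cosh_eq]
    have h2 : Real.exp (-u) < Real.exp u := Real.exp_lt_exp.mpr (by linarith)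
    linarith
  have hcosh : Real.cosh u < D := by nlinarith
  -- tanh facts
  have hsinh : u < Real.sinh u := Real.self_lt_sinh_iff.mpr hu
  have hcoshpos : 0 < Real.cosh u := Real.cosh_pos u
  have htanh : u / D < Real.tanh u := by
    rw [Real.tanh_eq_sinh_div_cosh, div_lt_div_iff₀ hD0 hcoshpos]
    nlinarith
  have htanhpos : 0 < Real.tanh u := by
    rw [Real.tanh_eq_sinh_div_cosh]
    have : 0 < Real.sinh u := by linarith
    positivity
  have htanhlt1 : Real.tanh u < 1 := by
    rw [Real.tanh_eq_sinh_div_cosh, div_lt_one hcoshpos, Real.sinh_eq, Real.cosh_eq]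
    have := Real.exp_pos (-u)
    linarith
  set y : ℝ := θ * Real.tanh u with hy_def
  have hy0 : 0 < y := by positivity
  have hy1 : y < 1 := by nlinarith
  have hat : y ≤ arctanh y := le_arctanh hy0.le hy1
  -- the main gap
  set x : ℝ := 2 * u with hx_def
  have hx : 0 < x := by positivity
  have hFval : Ftheta θ x = 2 * arctanh y := by
    rw [Ftheta, hy_def]
    congr 2
    rw [hx_def]; ring
  have hgap : x < (d : ℝ) * Ftheta θ x := by
    rw [hFval]
    have hdpos : (0:ℝ) < (d : ℝ) := by exact_mod_cast hd
    have h1 : u / D * θ = u / (d : ℝ) := by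
      rw [hD]; field_simp
    have h2 : u / (d : ℝ) < y := by
      rw [← h1, hy_def]
      nlinarith
    have h3 : u / (d : ℝ) < arctanh y := lt_of_lt_of_le h2 hat
    have := mul_lt_mul_of_pos_left h3 hdpos
    rw [mul_div_cancel₀ u hdpos.ne'] at this
    rw [hx_def]
    linarith
  set c : ℝ := (d : ℝ) * Ftheta θ x - x with hc_def
  have hc : 0 < c := by rw [hc_def]; linarith
  have hec : 1 < Real.exp c := by
    calc (1:ℝ) = Real.exp 0 := Real.exp_zero.symm
    _ < Real.exp c := Real.exp_lt_exp.mpr hc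
  refine ⟨1/2 - 1/(1 + Real.exp c), ?_, x, hx, ?_⟩
  · have : 1/(1 + Real.exp c) < 1/2 := by
      rw [div_lt_div_iff₀ (by linarith) two_pos]; linarith
    linarith
  · intro η hη1 hη2
    have hηlb : 1/(1 + Real.exp c) < η := by linarith
    have hηpos : 0 < η := lt_trans (by positivity) hηlb
    have h1η : 0 < 1 - η := by linarith
    have hratio : (1 - η) / η < Real.exp c := by
      rw [div_lt_iff₀ hηpos]
      have := (div_lt_iff₀ (by linarith : (0:ℝ) < 1 + Real.exp c)).mp hηlb
      nlinarith
    have hlog : Real.log ((1 - η) / η) < c := by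
      calc Real.log ((1 - η) / η) < Real.log (Real.exp c) :=
        Real.log_lt_log (by positivity) hratio
      _ = c := Real.log_exp c
    rw [hc_def] at hlog
    linarith
end

section
/- Let θ ∈ (0, 1) and let p(Δ) = 2√(Δ(1−Δ)) and q(Δ) = √(1 − θ²(1−2Δ)²). Then for every Δ ∈ (0, 1/2], the second derivatives satisfy q''(Δ) ≥ θ²·p''(Δ). -/
open Real Filter

private lemma deriv_q_aux (θ : ℝ) {x : ℝ} (hx : 0 < 1 - θ ^ 2 * (1 - 2 * x) ^ 2) :
    HasDerivAt (fun Δ : ℝ => Real.sqrt (1 - θ ^ 2 * (1 - 2 * Δ) ^ 2))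
      (2 * θ ^ 2 * (1 - 2 * x) / Real.sqrt (1 - θ ^ 2 * (1 - 2 * x) ^ 2)) x := by
  have hs : Real.sqrt (1 - θ ^ 2 * (1 - 2 * x) ^ 2) ≠ 0 :=
    ne_of_gt (Real.sqrt_pos.mpr hx)
  have h1 : HasDerivAt (fun Δ : ℝ => 1 - 2 * Δ) (-2) x := by
    simpa using ((hasDerivAt_id x).const_mul (2 : ℝ)).const_sub 1
  have hinner : HasDerivAt (fun Δ : ℝ => 1 - θ ^ 2 * (1 - 2 * Δ) ^ 2)
      (4 * θ ^ 2 * (1 - 2 * x)) x := by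
    have h3 := ((h1.pow 2).const_mul (θ ^ 2)).const_sub 1
    refine h3.congr_deriv (Eq.symm ?_); ring
  have := (Real.hasDerivAt_sqrt (ne_of_gt hx)).comp x hinner
  refine this.congr_deriv (Eq.symm ?_)
  field_simp
  ring

private lemma deriv2_q_aux (θ : ℝ) {x : ℝ} (hx : 0 < 1 - θ ^ 2 * (1 - 2 * x) ^ 2) :
    HasDerivAt (fun y : ℝ => 2 * θ ^ 2 * (1 - 2 * y) / Real.sqrt (1 - θ ^ 2 * (1 - 2 * y) ^ 2))
      (-4 * θ ^ 2 / (Real.sqrt (1 - θ ^ 2 * (1 - 2 * x) ^ 2)) ^ 3) x := by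
  have hspos : 0 < Real.sqrt (1 - θ ^ 2 * (1 - 2 * x) ^ 2) := Real.sqrt_pos.mpr hx
  have hs : Real.sqrt (1 - θ ^ 2 * (1 - 2 * x) ^ 2) ≠ 0 := ne_of_gt hspos
  have hsq : (Real.sqrt (1 - θ ^ 2 * (1 - 2 * x) ^ 2)) ^ 2 = 1 - θ ^ 2 * (1 - 2 * x) ^ 2 :=
    Real.sq_sqrt hx.le
  have hN : HasDerivAt (fun y : ℝ => 2 * θ ^ 2 * (1 - 2 * y)) (-4 * θ ^ 2) x := by
    have h1 : HasDerivAt (fun Δ : ℝ => 1 - 2 * Δ) (-2) x := by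
      simpa using ((hasDerivAt_id x).const_mul (2 : ℝ)).const_sub 1
    have := h1.const_mul (2 * θ ^ 2)
    refine this.congr_deriv (Eq.symm ?_); ring
  have := hN.div (deriv_q_aux θ hx) hs
  refine this.congr_deriv (Eq.symm ?_)
  set s := Real.sqrt (1 - θ ^ 2 * (1 - 2 * x) ^ 2) with hsdef
  field_simp
  linear_combination (4 * θ ^ 2) * hsq

private lemma deriv_p_aux {x : ℝ} (hx : 0 < x * (1 - x)) :
    HasDerivAt (fun Δ : ℝ => 2 * Real.sqrt (Δ * (1 - Δ)))
      ((1 - 2 * x) / Real.sqrt (x * (1 - x))) x := by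
  have hs : Real.sqrt (x * (1 - x)) ≠ 0 := ne_of_gt (Real.sqrt_pos.mpr hx)
  have hinner : HasDerivAt (fun Δ : ℝ => Δ * (1 - Δ)) (1 - 2 * x) x := by
    have := (hasDerivAt_id x).mul ((hasDerivAt_id x).const_sub 1)
    refine this.congr_deriv (Eq.symm ?_); simp only [id_eq]; ring
  have := ((Real.hasDerivAt_sqrt (ne_of_gt hx)).comp x hinner).const_mul (2 : ℝ)
  refine this.congr_deriv (Eq.symm ?_)
  field_simp

private lemma deriv2_p_aux {x : ℝ} (hx : 0 < x * (1 - x)) :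
    HasDerivAt (fun y : ℝ => (1 - 2 * y) / Real.sqrt (y * (1 - y)))
      (-1 / (2 * (Real.sqrt (x * (1 - x))) ^ 3)) x := by
  have hspos : 0 < Real.sqrt (x * (1 - x)) := Real.sqrt_pos.mpr hx
  have hs : Real.sqrt (x * (1 - x)) ≠ 0 := ne_of_gt hspos
  have hsq : (Real.sqrt (x * (1 - x))) ^ 2 = x * (1 - x) := Real.sq_sqrt hx.le
  have hN : HasDerivAt (fun y : ℝ => 1 - 2 * y) (-2) x := by
    simpa using ((hasDerivAt_id x).const_mul (2 : ℝ)).const_sub 1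
  have hD : HasDerivAt (fun y : ℝ => Real.sqrt (y * (1 - y)))
      ((1 - 2 * x) / (2 * Real.sqrt (x * (1 - x)))) x := by
    have hinner : HasDerivAt (fun Δ : ℝ => Δ * (1 - Δ)) (1 - 2 * x) x := by
      have := (hasDerivAt_id x).mul ((hasDerivAt_id x).const_sub 1)
      refine this.congr_deriv (Eq.symm ?_); simp only [id_eq]; ring
    have := (Real.hasDerivAt_sqrt (ne_of_gt hx)).comp x hinner
    refine this.congr_deriv (Eq.symm ?_)
    field_simp
  have := hN.div hD hs
  refine this.congr_deriv (Eq.symm ?_)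
  set s := Real.sqrt (x * (1 - x)) with hsdef
  field_simp
  linear_combination 4 * hsq

/-- For `θ ∈ (0,1)`, with `p(Δ) = 2√(Δ(1−Δ))` and `q(Δ) = √(1 − θ²(1−2Δ)²)`,
the second derivatives satisfy `q''(Δ) ≥ θ²·p''(Δ)` for all `Δ ∈ (0, 1/2]`. -/
theorem second_deriv_comparison (θ : ℝ) (hθ0 : 0 < θ) (hθ1 : θ < 1)
    (p q : ℝ → ℝ)
    (hp : p = fun Δ : ℝ => 2 * Real.sqrt (Δ * (1 - Δ)))
    (hq : q = fun Δ : ℝ => Real.sqrt (1 - θ ^ 2 * (1 - 2 * Δ) ^ 2)) :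
    ∀ Δ ∈ Set.Ioc (0 : ℝ) (1 / 2),
      θ ^ 2 * iteratedDeriv 2 p Δ ≤ iteratedDeriv 2 q Δ := by
  intro Δ hΔ
  obtain ⟨h0, h2⟩ := hΔ
  have hΔ1 : Δ < 1 := by linarith
  have hθ2 : θ ^ 2 < 1 := by nlinarith
  have hgΔ : 0 < 1 - θ ^ 2 * (1 - 2 * Δ) ^ 2 := by
    have hu : (1 - 2 * Δ) ^ 2 < 1 := by nlinarith
    nlinarith [sq_nonneg (1 - 2 * Δ), sq_nonneg θ]
  have hfΔ : 0 < Δ * (1 - Δ) := by nlinarith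
  -- second derivative of q
  have hqopen : IsOpen {x : ℝ | 0 < 1 - θ ^ 2 * (1 - 2 * x) ^ 2} :=
    isOpen_lt continuous_const (by continuity)
  have hqnhds : {x : ℝ | 0 < 1 - θ ^ 2 * (1 - 2 * x) ^ 2} ∈ nhds Δ :=
    hqopen.mem_nhds hgΔ
  have hdq : deriv q =ᶠ[nhds Δ]
      (fun x => 2 * θ ^ 2 * (1 - 2 * x) / Real.sqrt (1 - θ ^ 2 * (1 - 2 * x) ^ 2)) := by
    filter_upwards [hqnhds] with x hx
    rw [hq]
    exact (deriv_q_aux θ hx).deriv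
  have hq2 : iteratedDeriv 2 q Δ =
      -4 * θ ^ 2 / (Real.sqrt (1 - θ ^ 2 * (1 - 2 * Δ) ^ 2)) ^ 3 := by
    rw [iteratedDeriv_succ, iteratedDeriv_one, hdq.deriv_eq]
    exact (deriv2_q_aux θ hgΔ).deriv
  -- second derivative of p
  have hpopen : IsOpen {x : ℝ | 0 < x * (1 - x)} :=
    isOpen_lt continuous_const (by continuity)
  have hpnhds : {x : ℝ | 0 < x * (1 - x)} ∈ nhds Δ := hpopen.mem_nhds hfΔ
  have hdp : deriv p =ᶠ[nhds Δ]
      (fun x => (1 - 2 * x) / Real.sqrt (x * (1 - x))) := by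
    filter_upwards [hpnhds] with x hx
    rw [hp]
    exact (deriv_p_aux hx).deriv
  have hp2 : iteratedDeriv 2 p Δ = -1 / (2 * (Real.sqrt (Δ * (1 - Δ))) ^ 3) := by
    rw [iteratedDeriv_succ, iteratedDeriv_one, hdp.deriv_eq]
    exact (deriv2_p_aux hfΔ).deriv
  rw [hp2, hq2]
  set s := Real.sqrt (Δ * (1 - Δ)) with hsdef
  set t := Real.sqrt (1 - θ ^ 2 * (1 - 2 * Δ) ^ 2) with htdef
  have hspos : 0 < s := Real.sqrt_pos.mpr hfΔ
  have htpos : 0 < t := Real.sqrt_pos.mpr hgΔ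
  have hst : 2 * s ≤ t := by
    have h4f : Real.sqrt (4 * (Δ * (1 - Δ))) = 2 * s := by
      rw [hsdef, show (4 : ℝ) * (Δ * (1 - Δ)) = 2 ^ 2 * (Δ * (1 - Δ)) by ring,
        Real.sqrt_mul (by positivity), Real.sqrt_sq (by norm_num)]
    rw [← h4f, htdef]
    apply Real.sqrt_le_sqrt
    nlinarith [mul_nonneg (by nlinarith : (0:ℝ) ≤ 1 - θ ^ 2) (sq_nonneg (1 - 2 * Δ))]
  have hcube : 8 * s ^ 3 ≤ t ^ 3 := by
    nlinarith [pow_le_pow_left₀ (by positivity : (0:ℝ) ≤ 2 * s) hst 3]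
  have h1 : θ ^ 2 * (-1 / (2 * s ^ 3)) = -(θ ^ 2 / (2 * s ^ 3)) := by ring
  have h2 : -4 * θ ^ 2 / t ^ 3 = -(4 * θ ^ 2 / t ^ 3) := by ring
  rw [h1, h2, neg_le_neg_iff, div_le_div_iff₀ (by positivity) (by positivity)]
  nlinarith [mul_nonneg (sq_nonneg θ) (sub_nonneg.mpr hcube)]
end
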